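/- Let G be a locally finite simple graph, let D be an element of the algebraic cycle space C_alg(G), and let e ∈ D. Then there is a finite circuit C of G with e ∈ C ⊆ D, or there is a double ray of G whose edge set D' satisfies e ∈ D' ⊆ D. -/

import Mathlib

open Set

variable {V : Type*}

/-- The edge set of a cycle of `G` (a finite circuit). -/
def IsCircuit (G : SimpleGraph V) (C : Set (Sym2 V)) : Prop :=
  ∃ (v : V) (w : G.Walk v v), w.IsCycle ∧ C = {e | e ∈ w.edges}

/-- The cut `E(A, V∖A)`: edges of `G` with exactly one endvertex in `A`. -/
def cutEdges (G : SimpleGraph V) (A : Set V) : Set (Sym2 V) :=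
  {e | ∃ x y, G.Adj x y ∧ x ∈ A ∧ y ∉ A ∧ e = s(x, y)}

/-- `C` is a cut of `G`. -/
def IsCut (G : SimpleGraph V) (C : Set (Sym2 V)) : Prop :=
  ∃ A : Set V, C = cutEdges G A

/-- A bond is a ⊆-minimal nonempty cut. -/
def IsBond (G : SimpleGraph V) (B : Set (Sym2 V)) : Prop :=
  IsCut G B ∧ B ≠ ∅ ∧ ∀ C, IsCut G C → C ≠ ∅ → C ⊆ B → C = B

/-- Two edge sets are orthogonal: their intersection is finite and of even cardinality. -/
def EvenInter (D F : Set (Sym2 V)) : Prop :=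
  (D ∩ F).Finite ∧ Even (D ∩ F).ncard

/-- A ray in `G`. -/
def IsRay (G : SimpleGraph V) (R : ℕ → V) : Prop :=
  Function.Injective R ∧ ∀ n, G.Adj (R n) (R (n + 1))

/-- A double ray in `G`. -/
def IsDoubleRay (G : SimpleGraph V) (R : ℤ → V) : Prop :=
  Function.Injective R ∧ ∀ n, G.Adj (R n) (R (n + 1))

/-- The edge set of a double ray. -/
def doubleRayEdges (R : ℤ → V) : Set (Sym2 V) :=
  {e | ∃ n : ℤ, e = s(R n, R (n + 1))}

/-- `D` is the edge set of some double ray of `G`. -/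
def IsDoubleRayEdgeSet (G : SimpleGraph V) (D : Set (Sym2 V)) : Prop :=
  ∃ R : ℤ → V, IsDoubleRay G R ∧ D = doubleRayEdges R

/-- `a` and `b` are joined by a walk of `G` all of whose vertices avoid `S`,
i.e. they lie in a common component of `G − S`. -/
def ConnAvoiding (G : SimpleGraph V) (S : Set V) (a b : V) : Prop :=
  ∃ w : G.Walk a b, ∀ x ∈ w.support, x ∉ S

/-- `v` lies in `C(S,R)`, the component of `G − S` containing a tail of the ray `R`. -/
def InC (G : SimpleGraph V) (S : Set V) (R : ℕ → V) (v : V) : Prop :=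
  ∃ m : ℕ, (∀ n, R (m + n) ∉ S) ∧ ConnAvoiding G S v (R m)

/-- The rays `R` and `R'` are equivalent (lie in the same end): for every finite `S`
some component of `G − S` contains a tail of both. -/
def RayEquiv (G : SimpleGraph V) (R R' : ℕ → V) : Prop :=
  ∀ S : Set V, S.Finite → ∃ m m', (∀ n, R (m + n) ∉ S) ∧ (∀ n, R' (m' + n) ∉ S) ∧
    ConnAvoiding G S (R m) (R' m')

/-- The sequence `v` of vertices converges to the end of the ray `R`: for every finite `S`
all but finitely many `v i` lie in `C(S,R)`. -/
def ConvergesTo (G : SimpleGraph V) (R : ℕ → V) (v : ℕ → V) : Prop :=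
  ∀ S : Set V, S.Finite → {i : ℕ | ¬ InC G S R (v i)}.Finite

/-- `F` is the vertex set of a `k`-fan from `u` to `Y`: a union of `k` paths starting
at `u`, pairwise sharing no vertex other than `u`, ending in `k` distinct vertices of `Y`. -/
def IsFan (G : SimpleGraph V) (k : ℕ) (u : V) (Y : Set V) (F : Set V) : Prop :=
  ∃ (ends : Fin k → V) (P : ∀ i, G.Walk u (ends i)),
    (∀ i, (P i).IsPath) ∧ (∀ i, ends i ∈ Y) ∧ Function.Injective ends ∧
    (∀ i j, i ≠ j → ∀ x, x ∈ (P i).support → x ∈ (P j).support → x = u) ∧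
    F = ⋃ i, {x | x ∈ (P i).support}

/-- `L` is the vertex set of a `k`-linkage from `x` to `y`: a union of `k` paths from
`x` to `y` pairwise sharing no vertices other than `x` and `y`. -/
def IsLinkage (G : SimpleGraph V) (k : ℕ) (x y : V) (L : Set V) : Prop :=
  ∃ P : Fin k → G.Walk x y,
    (∀ i, (P i).IsPath) ∧ Function.Injective P ∧
    (∀ i j, i ≠ j → ∀ z, z ∈ (P i).support → z ∈ (P j).support → z = x ∨ z = y) ∧
    L = ⋃ i, {z | z ∈ (P i).support}

/-- The end represented by the ray `R` is `k`-padded: for every equivalent ray `R'`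
there is a finite `S` such that every vertex of `C(S,R')` admits a `k`-fan to the
image of `R'` in `G`. -/
def IsPaddedEnd (G : SimpleGraph V) (k : ℕ) (R : ℕ → V) : Prop :=
  ∀ R' : ℕ → V, IsRay G R' → RayEquiv G R R' →
    ∃ S : Set V, S.Finite ∧ ∀ v, InC G S R' v → ∃ F, IsFan G k v (Set.range R') F

/-- `G` is `k`-padded at infinity: every end of `G` is `k`-padded. -/
def PaddedAtInfinity (G : SimpleGraph V) (k : ℕ) : Prop :=
  ∀ R : ℕ → V, IsRay G R → IsPaddedEnd G k R

/-- `G` is `k`-connected: it has more than `k` vertices and deleting fewer than `k`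
vertices leaves it connected. -/
def KConnected (G : SimpleGraph V) (k : ℕ) : Prop :=
  (k : ℕ∞) < (Set.univ : Set V).encard ∧
  ∀ S : Set V, S.Finite → S.ncard < k → (G.induce (Sᶜ : Set V)).Connected

/-- The algebraic cycle space: edge sets meeting every vertex in an even number of edges. -/
def CAlg (G : SimpleGraph V) : Set (Set (Sym2 V)) :=
  {D | D ⊆ G.edgeSet ∧ ∀ v : V, {e ∈ D | v ∈ e}.Finite ∧ Even {e ∈ D | v ∈ e}.ncard}

/-- The finite-cycle space: symmetric-difference sums of finitely many finite circuits. -/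
def CFin (G : SimpleGraph V) : Set (Set (Sym2 V)) :=
  {D | ∃ l : List (Set (Sym2 V)), (∀ C ∈ l, IsCircuit G C) ∧ D = l.foldr symmDiff ∅}

/-- In a locally finite graph, every edge of an element `D` of the algebraic cycle
space lies in a finite circuit contained in `D` or in the edge set of a double ray
contained in `D`. -/
private lemma dist_triangle' {Γ : SimpleGraph V} {x y z : V}
    (h1 : Γ.Reachable x y) (h2 : Γ.Reachable y z) :
    Γ.dist x z ≤ Γ.dist x y + Γ.dist y z := by
  obtain ⟨p, hp⟩ := h1.exists_walk_length_eq_dist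
  obtain ⟨q, hq⟩ := h2.exists_walk_length_eq_dist
  calc Γ.dist x z ≤ (p.append q).length := Γ.dist_le _
    _ = Γ.dist x y + Γ.dist y z := by rw [SimpleGraph.Walk.length_append, hp, hq]

private lemma ball_finite (Γ : SimpleGraph V) (hfin : ∀ v : V, (Γ.neighborSet v).Finite)
    (a : V) : ∀ n : ℕ, {v | Γ.Reachable a v ∧ Γ.dist a v ≤ n}.Finite := by
  intro n
  induction n with
  | zero =>
    refine (Set.finite_singleton a).subset ?_
    rintro v ⟨hv, hd⟩
    have : Γ.dist a v = 0 := Nat.le_zero.mp hd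
    simp [Set.mem_singleton_iff, (hv.dist_eq_zero_iff.mp this).symm]
  | succ n ih =>
    refine (ih.union (Set.Finite.biUnion ih (fun w _ => hfin w))).subset ?_
    rintro v ⟨hv, hd⟩
    by_cases h : Γ.dist a v ≤ n
    · exact Or.inl ⟨hv, h⟩
    · right
      obtain ⟨p, hp⟩ := hv.exists_walk_length_eq_dist
      have hlen : p.reverse.length = n + 1 := by
        rw [SimpleGraph.Walk.length_reverse, hp]; omega
      rcases hq : p.reverse with _ | ⟨hadj, q⟩
      · rw [hq] at hlen; simp at hlen
      · rename_i w
        rw [hq] at hlen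
        simp only [SimpleGraph.Walk.length_cons, Nat.succ.injEq] at hlen
        have hrw' : Γ.Reachable a w := q.reverse.reachable
        have hwB : w ∈ {v | Γ.Reachable a v ∧ Γ.dist a v ≤ n} :=
          ⟨hrw', by calc Γ.dist a w ≤ q.reverse.length := Γ.dist_le _
            _ = n := by rw [SimpleGraph.Walk.length_reverse, hlen]⟩
        exact Set.mem_biUnion hwB hadj.symm

private lemma exists_ray_aux (Γ : SimpleGraph V) (hfin : ∀ v : V, (Γ.neighborSet v).Finite)
    (a : V) (hinf : {v | Γ.Reachable a v}.Infinite) :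
    ∃ R : ℕ → V, R 0 = a ∧ Function.Injective R ∧ (∀ n, Γ.Adj (R n) (R (n + 1))) ∧
      ∀ n, Γ.Reachable a (R n) := by
  classical
  set Inv : ℕ → V → Prop := fun n v => Γ.Reachable a v ∧ Γ.dist a v = n ∧
    {u | Γ.Reachable v u ∧ Γ.dist a v + Γ.dist v u = Γ.dist a u}.Infinite with hInv
  have base : Inv 0 a := by
    refine ⟨SimpleGraph.Reachable.refl a, SimpleGraph.dist_self, ?_⟩
    refine hinf.mono ?_
    intro u hu
    simp only [Set.mem_setOf_eq, SimpleGraph.dist_self, zero_add]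
    exact ⟨hu, trivial⟩
  have step : ∀ n v, Inv n v → ∃ w, Γ.Adj v w ∧ Inv (n + 1) w := by
    rintro n v ⟨hreach, hdist, hS⟩
    set S := {u | Γ.Reachable v u ∧ Γ.dist a v + Γ.dist v u = Γ.dist a u} with hSdef
    have hS' : (S \ {u | Γ.Reachable a u ∧ Γ.dist a u ≤ n}).Infinite :=
      hS.diff (ball_finite Γ hfin a n)
    have key : ∀ u, u ∈ S \ {u | Γ.Reachable a u ∧ Γ.dist a u ≤ n} →
        ∃ w, w ∈ Γ.neighborSet v ∧ Γ.Reachable w u ∧ Γ.dist a w = n + 1 ∧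
          Γ.dist a w + Γ.dist w u = Γ.dist a u := by
      rintro u ⟨⟨hvu, hbetw⟩, hnb⟩
      have hau : Γ.Reachable a u := hreach.trans hvu
      have hgt : n < Γ.dist a u := by
        by_contra h
        exact hnb ⟨hau, by omega⟩
      have hvu_pos : 1 ≤ Γ.dist v u := by omega
      obtain ⟨p, hp⟩ := hvu.exists_walk_length_eq_dist
      rcases hpe : p with _ | ⟨hadj, q⟩
      · rw [hpe] at hp; simp at hp; omega
      · rename_i w
        rw [hpe] at hp
        simp only [SimpleGraph.Walk.length_cons] at hp
        have h1 : Γ.dist w u ≤ q.length := Γ.dist_le q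
        have h2 : Γ.dist v w ≤ 1 := by
          have := Γ.dist_le (SimpleGraph.Walk.cons hadj SimpleGraph.Walk.nil)
          simpa using this
        have h2' : Γ.dist a w ≤ n + 1 := by
          have := dist_triangle' hreach hadj.reachable
          omega
        have h3 : Γ.dist a u ≤ Γ.dist a w + Γ.dist w u :=
          dist_triangle' (hreach.trans hadj.reachable) q.reachable
        exact ⟨w, hadj, q.reachable, by omega, by omega⟩
    choose! f hf1 hf2 hf3 hf4 using key
    have hpig : ∃ w ∈ Γ.neighborSet v,
        {u ∈ S \ {u | Γ.Reachable a u ∧ Γ.dist a u ≤ n} | f u = w}.Infinite := by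
      by_contra hcon
      push_neg at hcon
      apply hS'
      have hsub : S \ {u | Γ.Reachable a u ∧ Γ.dist a u ≤ n} ⊆
          ⋃ w ∈ Γ.neighborSet v, {u ∈ S \ {u | Γ.Reachable a u ∧ Γ.dist a u ≤ n} | f u = w} := by
        intro u hu
        refine Set.mem_biUnion (hf1 u hu) ?_
        exact ⟨hu, rfl⟩
      refine Set.Finite.subset (Set.Finite.biUnion (hfin v) ?_) hsub
      intro w hw
      exact hcon w hw
    obtain ⟨w, hwN, hwInf⟩ := hpig
    obtain ⟨u0, hu0⟩ := hwInf.nonempty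
    refine ⟨w, hwN, hreach.trans (hwN : Γ.Adj v w).reachable, ?_, ?_⟩
    · rw [← hu0.2]; exact hf3 u0 hu0.1
    · refine hwInf.mono ?_
      rintro u ⟨hu, hfu⟩
      subst hfu
      exact ⟨hf2 u hu, hf4 u hu⟩
  choose! g hg1 hg2 using step
  let seq : ℕ → V := fun n => Nat.rec a (fun m vm => g m vm) n
  have hseq : ∀ n, Inv n (seq n) := by
    intro n
    induction n with
    | zero => exact base
    | succ m ih => exact hg2 m (seq m) ih
  refine ⟨seq, rfl, ?_, ?_, fun n => (hseq n).1⟩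
  · intro m n h
    have hm := (hseq m).2.1
    have hn := (hseq n).2.1
    rw [h] at hm
    omega
  · intro n
    exact hg1 n (seq n) (hseq n)

private lemma component_infinite (H : SimpleGraph V)
    (hfin : ∀ v : V, (H.neighborSet v).Finite)
    (heven : ∀ v : V, Even (H.neighborSet v).ncard) {a b : V} (hab : H.Adj a b)
    (hnr : ¬ (H.deleteEdges {s(a, b)}).Reachable a b) :
    {v | (H.deleteEdges {s(a, b)}).Reachable a v}.Infinite := by
  classical
  set H' := H.deleteEdges {s(a, b)} with hH'
  by_contra hcon
  rw [Set.not_infinite] at hcon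
  set K := {v | H'.Reachable a v} with hK
  have haK : a ∈ K := SimpleGraph.Reachable.refl a
  have hbK : b ∉ K := hnr
  have hclose : ∀ v ∈ K, ∀ w, H.Adj v w → w ∈ K ∨ (v = a ∧ w = b) := by
    intro v hv w hw
    by_cases he : s(v, w) = s(a, b)
    · replace he : (v, w) = (a, b) ∨ (v, w) = (a, b).swap := Sym2.mk_eq_mk_iff.mp he
      rcases he with he | he
      · right
        simp only [Prod.mk.injEq] at he
        exact he
      · exfalso
        simp only [Prod.swap_prod_mk, Prod.mk.injEq] at he
        exact hbK (he.1 ▸ hv)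
    · left
      have hadj' : H'.Adj v w := by
        rw [hH']
        exact SimpleGraph.deleteEdges_adj.mpr ⟨hw, by simpa using he⟩
      exact hv.trans hadj'.reachable
  letI : Fintype K := hcon.fintype
  set Γ := SimpleGraph.induce K H with hΓ
  letI : DecidableRel Γ.Adj := Classical.decRel _
  have hdeg : ∀ v : K, Γ.degree v = (H.neighborSet ↑v ∩ K).ncard := by
    intro v
    have e : Γ.neighborSet v ≃ ↥(H.neighborSet ↑v ∩ K) :=
      { toFun := fun w => ⟨w.1.1, by
          have := w.2
          simp only [SimpleGraph.mem_neighborSet, hΓ, SimpleGraph.comap_adj,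
            Function.Embedding.coe_subtype] at this
          exact ⟨this, w.1.2⟩⟩
        invFun := fun x => ⟨⟨x.1, x.2.2⟩, by
          simp only [SimpleGraph.mem_neighborSet, hΓ, SimpleGraph.comap_adj,
            Function.Embedding.coe_subtype]
          exact x.2.1⟩
        left_inv := fun w => by ext; rfl
        right_inv := fun x => by ext; rfl }
    rw [← SimpleGraph.card_neighborSet_eq_degree]
    rw [Fintype.card_congr e, ← Nat.card_eq_fintype_card, Nat.card_coe_set_eq]
  have hNa : H.neighborSet a ∩ K = H.neighborSet a \ {b} := by
    ext w
    constructor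
    · rintro ⟨hw, hwK⟩
      exact ⟨hw, fun hb => hbK ((Set.mem_singleton_iff.mp hb) ▸ hwK)⟩
    · rintro ⟨hw, hwb⟩
      refine ⟨hw, ?_⟩
      rcases hclose a haK w hw with h | ⟨_, h2⟩
      · exact h
      · exact absurd (Set.mem_singleton_iff.mpr h2) hwb
  have hNv : ∀ v ∈ K, v ≠ a → H.neighborSet v ∩ K = H.neighborSet v := by
    intro v hv hva
    ext w
    constructor
    · rintro ⟨h1, _⟩; exact h1
    · intro hw
      refine ⟨hw, ?_⟩
      rcases hclose v hv w hw with h | ⟨h1, _⟩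
      · exact h
      · exact absurd h1 hva
  have hodd : Odd (Γ.degree ⟨a, haK⟩) := by
    rw [hdeg, hNa]
    have hbA : b ∈ H.neighborSet a := hab
    rw [Set.ncard_diff_singleton_of_mem hbA]
    obtain ⟨k, hk⟩ := heven a
    have hk1 : 0 < (H.neighborSet a).ncard := (Set.ncard_pos (hfin a)).mpr ⟨b, hbA⟩
    exact ⟨k - 1, by omega⟩
  have heven_other : ∀ v : K, v ≠ ⟨a, haK⟩ → Even (Γ.degree v) := by
    intro v hv
    rw [hdeg, hNv v.1 v.2 (fun h => hv (Subtype.ext h))]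
    exact heven v
  have hsum : Even (∑ v : K, Γ.degree v) := by
    rw [SimpleGraph.sum_degrees_eq_twice_card_edges]
    exact ⟨Γ.edgeFinset.card, by ring⟩
  rw [← Finset.add_sum_erase Finset.univ _ (Finset.mem_univ ⟨a, haK⟩)] at hsum
  have hrest : Even (∑ v ∈ Finset.univ.erase (⟨a, haK⟩ : K), Γ.degree v) :=
    Finset.even_sum _ (fun v hv => heven_other v (Finset.ne_of_mem_erase hv))
  obtain ⟨x, hx⟩ := hodd
  obtain ⟨y, hy⟩ := hrest
  obtain ⟨z, hz⟩ := hsum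
  rw [hx, hy] at hz
  omega

private lemma fromEdgeSet_neighbor (G : SimpleGraph V) (hlf : ∀ x : V, (G.neighborSet x).Finite)
    {D : Set (Sym2 V)} (hsub : D ⊆ G.edgeSet)
    (hv : ∀ v : V, {e ∈ D | v ∈ e}.Finite ∧ Even {e ∈ D | v ∈ e}.ncard) (v : V) :
    ((SimpleGraph.fromEdgeSet D).neighborSet v).Finite ∧
      Even ((SimpleGraph.fromEdgeSet D).neighborSet v).ncard := by
  classical
  set H := SimpleGraph.fromEdgeSet D with hH
  have hNsub : H.neighborSet v ⊆ G.neighborSet v := by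
    intro w hw
    have h1 : H.Adj v w := hw
    rw [hH, SimpleGraph.fromEdgeSet_adj] at h1
    exact (hsub h1.1 : G.Adj v w)
  have hNfin := (hlf v).subset hNsub
  refine ⟨hNfin, ?_⟩
  have himg : (fun w => s(v, w)) '' H.neighborSet v = {e ∈ D | v ∈ e} := by
    ext e'
    constructor
    · rintro ⟨w, hw, rfl⟩
      have h1 : H.Adj v w := hw
      rw [hH, SimpleGraph.fromEdgeSet_adj] at h1
      exact ⟨h1.1, Sym2.mem_mk_left v w⟩
    · rintro ⟨heD, hve⟩
      have hnd : ¬ e'.IsDiag := G.not_isDiag_of_mem_edgeSet (hsub heD)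
      refine ⟨Sym2.Mem.other hve, ?_, Sym2.other_spec hve⟩
      show H.Adj v _
      rw [hH, SimpleGraph.fromEdgeSet_adj]
      refine ⟨by rw [Sym2.other_spec hve]; exact heD, ?_⟩
      intro h
      apply hnd
      rw [← Sym2.other_spec hve, ← h]
      exact Sym2.mk_isDiag_iff.mpr rfl
  have hinj : Set.InjOn (fun w => s(v, w)) (H.neighborSet v) := by
    intro w1 _ w2 _ h
    exact Sym2.congr_right.mp h
  have hcard := Set.ncard_image_of_injOn hinj
  rw [himg] at hcard
  rw [← hcard]
  exact (hv v).2


theorem stmt_14 (G : SimpleGraph V) (hlf : ∀ x : V, (G.neighborSet x).Finite)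
    (D : Set (Sym2 V)) (hD : D ∈ CAlg G) (e : Sym2 V) (he : e ∈ D) :
    (∃ C, IsCircuit G C ∧ e ∈ C ∧ C ⊆ D) ∨
      (∃ D', IsDoubleRayEdgeSet G D' ∧ e ∈ D' ∧ D' ⊆ D) := by
  classical
  obtain ⟨hDsub, hDeven⟩ := hD
  induction e using Sym2.ind with
  | _ a b =>
  have hGab : G.Adj a b := hDsub he
  set H := SimpleGraph.fromEdgeSet D with hH
  have hHle : H ≤ G := by
    intro v w hvw
    rw [hH, SimpleGraph.fromEdgeSet_adj] at hvw
    exact hDsub hvw.1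
  have hHab : H.Adj a b := by
    rw [hH, SimpleGraph.fromEdgeSet_adj]
    exact ⟨he, hGab.ne⟩
  have hHfin : ∀ v, (H.neighborSet v).Finite :=
    fun v => (fromEdgeSet_neighbor G hlf hDsub hDeven v).1
  have hHeven : ∀ v, Even (H.neighborSet v).ncard :=
    fun v => (fromEdgeSet_neighbor G hlf hDsub hDeven v).2
  set H' := H.deleteEdges {s(a, b)} with hH'
  have hH'le : H' ≤ H := SimpleGraph.deleteEdges_le _
  have hH'G : H' ≤ G := hH'le.trans hHle
  have hH'D : ∀ {x y : V}, H'.Adj x y → s(x, y) ∈ D := by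
    intro x y h
    have h2 : H.Adj x y := hH'le h
    rw [hH, SimpleGraph.fromEdgeSet_adj] at h2
    exact h2.1
  by_cases hr : H'.Reachable b a
  · left
    obtain ⟨q0⟩ := hr
    set q := q0.toPath with hq
    have hqpath : (q : H'.Walk b a).IsPath := q.2
    set p : G.Walk b a := SimpleGraph.Walk.mapLe hH'G (q : H'.Walk b a) with hp
    have hppath : p.IsPath := (SimpleGraph.Walk.mapLe_isPath hH'G).mpr hqpath
    have hpedges : p.edges = (q : H'.Walk b a).edges := by
      rw [hp, SimpleGraph.Walk.edges_mapLe_eq_edges]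
    have hnotin : s(a, b) ∉ p.edges := by
      rw [hpedges]
      intro hmem
      have h1 := SimpleGraph.Walk.edges_subset_edgeSet _ hmem
      rw [hH', SimpleGraph.edgeSet_deleteEdges] at h1
      exact h1.2 rfl
    set c : G.Walk a a := SimpleGraph.Walk.cons hGab p with hc
    have hcyc : c.IsCycle := (SimpleGraph.Walk.cons_isCycle_iff p hGab).mpr ⟨hppath, hnotin⟩
    refine ⟨{e' | e' ∈ c.edges}, ⟨a, c, hcyc, rfl⟩, ?_, ?_⟩
    · show s(a, b) ∈ c.edges
      rw [hc, SimpleGraph.Walk.edges_cons]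
      exact List.mem_cons_self
    · intro e' he'
      simp only [Set.mem_setOf_eq, hc, SimpleGraph.Walk.edges_cons, List.mem_cons] at he'
      rcases he' with rfl | he'
      · exact he
      · rw [hpedges] at he'
        have h1 := SimpleGraph.Walk.edges_subset_edgeSet _ he'
        rw [hH', SimpleGraph.edgeSet_deleteEdges] at h1
        have h2 := h1.1
        rw [hH, SimpleGraph.edgeSet_fromEdgeSet] at h2
        exact h2.1
  · right
    have hnr_ab : ¬ H'.Reachable a b := fun h => hr h.symm
    have hKainf := component_infinite H hHfin hHeven hHab hnr_ab
    have hswap : s(b, a) = s(a, b) := Sym2.eq_swap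
    have hnr_ba : ¬ (H.deleteEdges {s(b, a)}).Reachable b a := by
      rw [hswap]
      exact hr
    have hKbinf := component_infinite H hHfin hHeven hHab.symm hnr_ba
    rw [hswap] at hKbinf
    have hH'fin : ∀ v, (H'.neighborSet v).Finite :=
      fun v => (hHfin v).subset (fun w hw => hH'le hw)
    obtain ⟨Ra, hRa0, hRainj, hRaadj, hRareach⟩ := exists_ray_aux H' hH'fin a hKainf
    obtain ⟨Rb, hRb0, hRbinj, hRbadj, hRbreach⟩ := exists_ray_aux H' hH'fin b hKbinf
    have hdisj : ∀ m n, Ra m ≠ Rb n := by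
      intro m n h
      exact hnr_ab ((hRareach m).trans (h ▸ (hRbreach n)).symm)
    set R : ℤ → V := fun n => if 0 ≤ n then Rb n.toNat else Ra (-n - 1).toNat with hR
    have hRneg : ∀ n : ℤ, ¬ 0 ≤ n → R n = Ra (-n - 1).toNat := by
      intro n h
      rw [hR]
      simp [h]
    have hRpos : ∀ n : ℤ, 0 ≤ n → R n = Rb n.toNat := by
      intro n h
      rw [hR]
      simp [h]
    have hadjZ : ∀ n : ℤ, G.Adj (R n) (R (n + 1)) ∧ s(R n, R (n + 1)) ∈ D := by
      intro n
      rcases lt_trichotomy n (-1) with h | h | h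
      · rw [hRneg n (by omega), hRneg (n + 1) (by omega)]
        have ht : (-n - 1).toNat = (-(n + 1) - 1).toNat + 1 := by omega
        rw [ht]
        exact ⟨hH'G (hRaadj _).symm, hH'D (hRaadj _).symm⟩
      · subst h
        have h1 : R (-1) = a := by
          rw [hRneg (-1) (by omega)]
          norm_num [hRa0]
        have h2 : R (-1 + 1) = b := by
          norm_num [hRpos 0 le_rfl, hRb0]
        rw [h1, h2]
        exact ⟨hGab, he⟩
      · rw [hRpos n (by omega), hRpos (n + 1) (by omega)]
        have ht : (n + 1).toNat = n.toNat + 1 := by omega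
        rw [ht]
        exact ⟨hH'G (hRbadj _), hH'D (hRbadj _)⟩
    refine ⟨doubleRayEdges R, ⟨R, ⟨?_, fun n => (hadjZ n).1⟩, rfl⟩, ?_, ?_⟩
    · intro m n hmn
      by_cases hm : 0 ≤ m <;> by_cases hn : 0 ≤ n
      · rw [hRpos m hm, hRpos n hn] at hmn
        have := hRbinj hmn
        omega
      · rw [hRpos m hm, hRneg n hn] at hmn
        exact absurd hmn.symm (hdisj _ _)
      · rw [hRneg m hm, hRpos n hn] at hmn
        exact absurd hmn (hdisj _ _)
      · rw [hRneg m hm, hRneg n hn] at hmn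
        have := hRainj hmn
        omega
    · refine ⟨-1, ?_⟩
      have h1 : R (-1) = a := by
        rw [hRneg (-1) (by omega)]
        norm_num [hRa0]
      have h2 : R (-1 + 1) = b := by
        norm_num [hRpos 0 le_rfl, hRb0]
      rw [h1, h2]
    · rintro e' ⟨n, hn⟩
      rw [hn]
      exact (hadjZ n).2
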